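/- For every fixed Z > Z̃, the function y ↦ F(y,Z) attains a strict global maximum over y ∈ (0,∞) at the unique point ȳ determined by ȳ^{-5/3} = (P(Z)/Z^{5/3})·Z̃^{2/3}, and the maximal value equals S(Z) - S(Z̃) + 5/2 - (5/2)·((P(Z)/Z^{5/3})·Z̃^{2/3})^{3/5} + (1/10)·(S(Z) - S(Z̃))², which moreover equals G(Z̃/Z). -/

import Mathlib

/-- `P(Z) = Z` for `Z ≤ Z̃`, `P(Z) = (3/5)·Z^{5/3}·Z̃^{-2/3} + (2/5)·Z̃` for `Z > Z̃`. -/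
noncomputable def Pfun (Zt Z : ℝ) : ℝ :=
  if Z ≤ Zt then Z else (3 / 5) * Z ^ ((5 : ℝ) / 3) * Zt ^ (-((2 : ℝ) / 3)) + (2 / 5) * Zt

/-- `S(Z) = 1 - log(Z/Z̃)` for `Z ≤ Z̃`, `S(Z) = Z̃/Z` for `Z > Z̃`. -/
noncomputable def Sfun (Zt Z : ℝ) : ℝ :=
  if Z ≤ Zt then 1 - Real.log (Z / Zt) else Zt / Z

/-- `F(y,Z) = S(Z) - S(Z̃) + 5/2 - 1/y - (3/2)·(P(Z)/Z^{5/3})·y^{2/3}·Z̃^{2/3}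
+ (1/10)·(S(Z) - S(Z̃))²`. -/
noncomputable def Ffun (Zt y Z : ℝ) : ℝ :=
  Sfun Zt Z - Sfun Zt Zt + 5 / 2 - 1 / y -
    (3 / 2) * (Pfun Zt Z / Z ^ ((5 : ℝ) / 3)) * y ^ ((2 : ℝ) / 3) * Zt ^ ((2 : ℝ) / 3) +
    (1 / 10) * (Sfun Zt Z - Sfun Zt Zt) ^ 2

/-- `G(Y) = Y + 3/2 - (5/2)·(3/5 + (2/5)·Y^{5/3})^{3/5} + (1/10)·(Y - 1)²`. -/
noncomputable def Gfun (Y : ℝ) : ℝ :=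
  Y + 3 / 2 - (5 / 2) * (3 / 5 + (2 / 5) * Y ^ ((5 : ℝ) / 3)) ^ ((3 : ℝ) / 5) +
    (1 / 10) * (Y - 1) ^ 2

/-- Key elementary inequality: `1/t + (3/2) t^{2/3} > 5/2` for `t > 0`, `t ≠ 1`. -/
lemma key_ineq {t : ℝ} (ht : 0 < t) (hne : t ≠ 1) :
    5 / 2 < 1 / t + (3 / 2) * t ^ ((2 : ℝ) / 3) := by
  set u := t ^ ((1 : ℝ) / 3) with hu
  have hupos : 0 < u := Real.rpow_pos_of_pos ht _
  have hu3 : u ^ 3 = t := by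
    rw [hu, ← Real.rpow_natCast (t ^ ((1 : ℝ) / 3)) 3, ← Real.rpow_mul ht.le]
    norm_num
  have hu2 : t ^ ((2 : ℝ) / 3) = u ^ 2 := by
    rw [hu, ← Real.rpow_natCast (t ^ ((1 : ℝ) / 3)) 2, ← Real.rpow_mul ht.le]
    norm_num
  have hune : u ≠ 1 := by
    intro h
    apply hne
    rw [← hu3, h]; norm_num
  have h0 : u - 1 ≠ 0 := sub_ne_zero.mpr hune
  have hsq : 0 < (u - 1) ^ 2 :=
    lt_of_le_of_ne (sq_nonneg _) (Ne.symm (pow_ne_zero 2 h0))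
  have hc : (0 : ℝ) < 3 * u ^ 3 + 6 * u ^ 2 + 4 * u + 2 := by positivity
  have hfac : 0 < (u - 1) ^ 2 * (3 * u ^ 3 + 6 * u ^ 2 + 4 * u + 2) := mul_pos hsq hc
  have h3 : (0 : ℝ) < u ^ 3 := by positivity
  rw [hu2, ← hu3]
  rw [show 1 / u ^ 3 + 3 / 2 * u ^ 2 = (1 + 3 / 2 * u ^ 5) / u ^ 3 by field_simp,
    lt_div_iff₀ h3]
  nlinarith [hfac]

theorem stmt11 (Zt : ℝ) (hZt : 0 < Zt) (Z : ℝ) (hZ : Zt < Z) :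
    let A := Pfun Zt Z / Z ^ ((5 : ℝ) / 3) * Zt ^ ((2 : ℝ) / 3)
    let ybar := A ^ (-((3 : ℝ) / 5))
    0 < ybar ∧
    ybar ^ (-((5 : ℝ) / 3)) = A ∧
    (∀ y : ℝ, 0 < y → y ^ (-((5 : ℝ) / 3)) = A → y = ybar) ∧
    (∀ y : ℝ, 0 < y → y ≠ ybar → Ffun Zt y Z < Ffun Zt ybar Z) ∧
    Ffun Zt ybar Z =
      Sfun Zt Z - Sfun Zt Zt + 5 / 2 - (5 / 2) * A ^ ((3 : ℝ) / 5) +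
        (1 / 10) * (Sfun Zt Z - Sfun Zt Zt) ^ 2 ∧
    Ffun Zt ybar Z = Gfun (Zt / Z) := by
  intro A ybar
  have hZpos : 0 < Z := hZt.trans hZ
  have hZ53 : (0 : ℝ) < Z ^ ((5 : ℝ) / 3) := Real.rpow_pos_of_pos hZpos _
  have hP : Pfun Zt Z =
      (3 / 5) * Z ^ ((5 : ℝ) / 3) * Zt ^ (-((2 : ℝ) / 3)) + (2 / 5) * Zt :=
    if_neg (not_le.mpr hZ)
  have hPpos : 0 < Pfun Zt Z := by
    rw [hP]
    have h1 : (0 : ℝ) < Zt ^ (-((2 : ℝ) / 3)) := Real.rpow_pos_of_pos hZt _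
    positivity
  have hAdef : A = Pfun Zt Z / Z ^ ((5 : ℝ) / 3) * Zt ^ ((2 : ℝ) / 3) := rfl
  have hybardef : ybar = A ^ (-((3 : ℝ) / 5)) := rfl
  have hA : 0 < A := by
    rw [hAdef]
    have h1 : (0 : ℝ) < Zt ^ ((2 : ℝ) / 3) := Real.rpow_pos_of_pos hZt _
    positivity
  have hybar : 0 < ybar := Real.rpow_pos_of_pos hA _
  -- basic rpow facts
  have hfive : ybar ^ (-((5 : ℝ) / 3)) = A := by
    rw [hybardef, ← Real.rpow_mul hA.le]
    norm_num
  have hinv : 1 / ybar = A ^ ((3 : ℝ) / 5) := by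
    rw [one_div, hybardef, ← Real.rpow_neg_one (A ^ (-((3 : ℝ) / 5))),
      ← Real.rpow_mul hA.le]
    norm_num
  have hAy : A * ybar ^ ((2 : ℝ) / 3) = A ^ ((3 : ℝ) / 5) := by
    rw [hybardef, ← Real.rpow_mul hA.le]
    nth_rewrite 1 [← Real.rpow_one A]
    rw [← Real.rpow_add hA]
    norm_num
  -- F in normal form
  have hF : ∀ y : ℝ, Ffun Zt y Z =
      Sfun Zt Z - Sfun Zt Zt + 5 / 2 + (1 / 10) * (Sfun Zt Z - Sfun Zt Zt) ^ 2
        - 1 / y - (3 / 2) * (A * y ^ ((2 : ℝ) / 3)) := by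
    intro y
    rw [Ffun, hAdef]
    ring
  have hFybar : Ffun Zt ybar Z =
      Sfun Zt Z - Sfun Zt Zt + 5 / 2 - (5 / 2) * A ^ ((3 : ℝ) / 5) +
        (1 / 10) * (Sfun Zt Z - Sfun Zt Zt) ^ 2 := by
    rw [hF, hAy, hinv]
    ring
  refine ⟨hybar, hfive, ?_, ?_, hFybar, ?_⟩
  · -- uniqueness
    intro y hy hyA
    rw [hybardef, ← hyA, ← Real.rpow_mul hy.le]
    norm_num
  · -- strict maximality
    intro y hy hne
    set t : ℝ := y / ybar with htdef
    have ht : 0 < t := div_pos hy hybar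
    have htne : t ≠ 1 := by
      intro h
      exact hne (by rw [htdef, div_eq_one_iff_eq hybar.ne'] at h; exact h)
    have hyt : y = t * ybar := by
      rw [htdef, div_mul_cancel₀ y hybar.ne']
    have hkey := key_ineq ht htne
    have hA35 : 0 < A ^ ((3 : ℝ) / 5) := Real.rpow_pos_of_pos hA _
    have hsplit : 1 / y + (3 / 2) * (A * y ^ ((2 : ℝ) / 3)) =
        A ^ ((3 : ℝ) / 5) * (1 / t + (3 / 2) * t ^ ((2 : ℝ) / 3)) := by
      rw [hyt, Real.mul_rpow ht.le hybar.le]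
      have h1 : 1 / (t * ybar) = (1 / t) * (1 / ybar) := by
        field_simp
      rw [h1, hinv]
      linear_combination (3 / 2 * t ^ ((2 : ℝ) / 3)) * hAy
    rw [hF y, hF ybar, hinv, hAy]
    have : (5 / 2) * A ^ ((3 : ℝ) / 5) < 1 / y + (3 / 2) * (A * y ^ ((2 : ℝ) / 3)) := by
      rw [hsplit]
      calc (5 / 2) * A ^ ((3 : ℝ) / 5) = A ^ ((3 : ℝ) / 5) * (5 / 2) := by ring
        _ < A ^ ((3 : ℝ) / 5) * (1 / t + (3 / 2) * t ^ ((2 : ℝ) / 3)) :=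
            (mul_lt_mul_iff_right₀ hA35).mpr hkey
    linarith
  · -- value equals G(Zt/Z)
    have hSZ : Sfun Zt Z = Zt / Z := if_neg (not_le.mpr hZ)
    have hSZt : Sfun Zt Zt = 1 := by
      rw [Sfun, if_pos le_rfl, div_self (ne_of_gt hZt), Real.log_one]
      norm_num
    have hA2 : A = 3 / 5 + (2 / 5) * (Zt / Z) ^ ((5 : ℝ) / 3) := by
      rw [hAdef, hP, Real.div_rpow hZt.le hZpos.le]
      have h1 : Zt ^ (-((2 : ℝ) / 3)) * Zt ^ ((2 : ℝ) / 3) = 1 := by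
        rw [← Real.rpow_add hZt]; norm_num
      have h2 : Zt * Zt ^ ((2 : ℝ) / 3) = Zt ^ ((5 : ℝ) / 3) := by
        nth_rewrite 1 [← Real.rpow_one Zt]
        rw [← Real.rpow_add hZt]; norm_num
      have h3 : Z ^ ((5 : ℝ) / 3) * (Z ^ ((5 : ℝ) / 3))⁻¹ = 1 :=
        mul_inv_cancel₀ hZ53.ne'
      linear_combination (3 / 5) * h1 + (2 / 5 / Z ^ ((5 : ℝ) / 3)) * h2 +
        (3 / 5 * Zt ^ (-((2 : ℝ) / 3)) * Zt ^ ((2 : ℝ) / 3)) * h3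
    rw [hFybar, hSZ, hSZt, hA2, Gfun]
    ring
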